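/- Let X = (X, T, μ_X) and Z = (Z, R, μ_Z) be G systems, and let n ↦ X_n = (X_n, T_n, μ_{X_n}) be a sequence of G systems with factor maps π_n : X → X_n such that the σ-algebras σ(π_n) are increasing up to μ_X-null sets and their union generates the Borel σ-algebra of X up to μ_X-null sets (i.e., X is the inverse limit of the systems X_n). If each X_n is quasi-disjoint from Z, then X is quasi-disjoint from Z. -/

import Mathlib

open MeasureTheory Filter Topology

section Defs

variable {G : Type*} [Group G] {X Y : Type*} [MeasurableSpace X] [MeasurableSpace Y]

/-- A joining of two `G` systems: a probability measure on the product which is invariant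
under the diagonal action and has the two given measures as marginals. -/
def IsJoining (T : G → X → X) (S : G → Y → Y) (μX : Measure X) (μY : Measure Y)
    (ν : Measure (X × Y)) : Prop :=
  IsProbabilityMeasure ν ∧
    (∀ g : G, MeasurePreserving (fun p : X × Y => (T g p.1, S g p.2)) ν ν) ∧
    ν.map Prod.fst = μX ∧ ν.map Prod.snd = μY

/-- `f ∈ L²(X, μ)` is almost periodic if the orbit `{f ∘ T^g : g ∈ G}` has compact closure
in the norm topology of `L²(X, μ)`. -/
def AlmostPeriodic (T : G → X → X) (μ : Measure X) (f : Lp ℂ 2 μ) : Prop :=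
  IsCompact (closure {h : Lp ℂ 2 μ | ∃ g : G, (h : X → ℂ) =ᵐ[μ] fun x => f (T g x)})

/-- The joining `ν` projects to the product measure on the product of the Kronecker factors:
almost periodic functions of the two systems are uncorrelated under `ν`. -/
def ProjectsToKroneckerProduct (T : G → X → X) (S : G → Y → Y) (μX : Measure X)
    (μY : Measure Y) (ν : Measure (X × Y)) : Prop :=
  ∀ (f : Lp ℂ 2 μX) (h : Lp ℂ 2 μY), AlmostPeriodic T μX f → AlmostPeriodic S μY h →
    ∫ p, f p.1 * h p.2 ∂ν = (∫ x, f x ∂μX) * (∫ y, h y ∂μY)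

/-- Two `G` systems are quasi-disjoint if the only joining projecting to the product measure
on the product of the Kronecker factors is the product measure. -/
def QuasiDisjoint (T : G → X → X) (S : G → Y → Y) (μX : Measure X) (μY : Measure Y) : Prop :=
  ∀ ν : Measure (X × Y), IsJoining T S μX μY ν →
    ProjectsToKroneckerProduct T S μX μY ν → ν = μX.prod μY

/-- Two `G` systems are disjoint if the product measure is their only joining. -/
def DisjointSystems (T : G → X → X) (S : G → Y → Y) (μX : Measure X) (μY : Measure Y) : Prop :=
  ∀ ν : Measure (X × Y), IsJoining T S μX μY ν → ν = μX.prod μY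

/-- Two `G` systems are Kronecker disjoint if every joining projects to the product measure
on the product of the Kronecker factors. -/
def KroneckerDisjoint (T : G → X → X) (S : G → Y → Y) (μX : Measure X) (μY : Measure Y) :
    Prop :=
  ∀ ν : Measure (X × Y), IsJoining T S μX μY ν → ProjectsToKroneckerProduct T S μX μY ν

/-- A separating sieve for the system `(X, T, μ)`. -/
def HasSeparatingSieve (T : G → X → X) (μ : Measure X) : Prop :=
  ∃ A : ℕ → Set X, (∀ n, MeasurableSet (A n)) ∧ (∀ n, 0 < μ (A n)) ∧
    Tendsto (fun n => μ (A n)) atTop (𝓝 0) ∧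
    ∃ X' : Set X, μ X'ᶜ = 0 ∧
      ∀ x ∈ X', ∀ x' ∈ X', (∀ n : ℕ, ∃ g : G, T g x ∈ A n ∧ T g x' ∈ A n) → x = x'

/-- A factor map of `G` systems: a measurable, almost everywhere `G`-equivariant map
pushing `μX` forward to `μY`. -/
def IsFactorMap (T : G → X → X) (S : G → Y → Y) (μX : Measure X) (μY : Measure Y)
    (π : X → Y) : Prop :=
  Measurable π ∧ μX.map π = μY ∧ ∀ g : G, ∀ᵐ x ∂μX, π (T g x) = S g (π x)

/-- Ergodicity of a `G` system: every invariant Borel set is null or conull. -/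
def ErgodicSystem (T : G → X → X) (μ : Measure X) : Prop :=
  ∀ A : Set X, MeasurableSet A → (∀ g : G, T g ⁻¹' A = A) → μ A = 0 ∨ μ A = 1

end Defs

/-- Quasi-disjointness is preserved under inverse limits: if `X` is the
inverse limit of factors `X_n` (the σ-algebras `σ(π_n)` increase up to null sets and their
union generates the Borel σ-algebra of `X` up to null sets), and each `X_n` is quasi-disjoint
from `Z`, then `X` is quasi-disjoint from `Z`. -/
theorem quasi_disjointness_preserved_under_inverse_limits
    {G : Type*} [Group G] [Countable G]
    {X : Type*} [MetricSpace X] [CompactSpace X] [MeasurableSpace X] [BorelSpace X]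
    {Z : Type*} [MetricSpace Z] [CompactSpace Z] [MeasurableSpace Z] [BorelSpace Z]
    (T : G → X → X) (hT1 : ∀ x, T 1 x = x)
    (hTmul : ∀ g h x, T (g * h) x = T g (T h x))
    (hTcont : ∀ g, Continuous (T g))
    (μX : Measure X) (hXprob : IsProbabilityMeasure μX)
    (hTμ : ∀ g, MeasurePreserving (T g) μX μX)
    (R : G → Z → Z) (hR1 : ∀ z, R 1 z = z)
    (hRmul : ∀ g h z, R (g * h) z = R g (R h z))
    (hRcont : ∀ g, Continuous (R g))
    (μZ : Measure Z) (hZprob : IsProbabilityMeasure μZ)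
    (hRμ : ∀ g, MeasurePreserving (R g) μZ μZ)
    -- the sequence of systems `X_n`
    (Xn : ℕ → Type*) [∀ n, MetricSpace (Xn n)] [∀ n, CompactSpace (Xn n)]
    [∀ n, MeasurableSpace (Xn n)] [∀ n, BorelSpace (Xn n)]
    (Tn : ∀ n, G → Xn n → Xn n)
    (hTn1 : ∀ n x, Tn n 1 x = x)
    (hTnmul : ∀ n g h x, Tn n (g * h) x = Tn n g (Tn n h x))
    (hTncont : ∀ n g, Continuous (Tn n g))
    (μn : ∀ n, Measure (Xn n)) (hprobn : ∀ n, IsProbabilityMeasure (μn n))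
    (hTnμ : ∀ n g, MeasurePreserving (Tn n g) (μn n) (μn n))
    -- the factor maps realizing `X` as the inverse limit of the `X_n`
    (πn : ∀ n, X → Xn n)
    (hπn : ∀ n, IsFactorMap T (Tn n) μX (μn n) (πn n))
    (hmono : ∀ (n : ℕ) (A : Set X),
      MeasurableSet[MeasurableSpace.comap (πn n) inferInstance] A →
      ∃ B : Set X, MeasurableSet[MeasurableSpace.comap (πn (n + 1)) inferInstance] B ∧
        μX (symmDiff A B) = 0)
    (hgen : ∀ A : Set X, MeasurableSet A →
      ∃ B : Set X, MeasurableSet[⨆ n, MeasurableSpace.comap (πn n) inferInstance] B ∧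
        μX (symmDiff A B) = 0)
    (hQD : ∀ n, QuasiDisjoint (Tn n) R (μn n) μZ) :
    QuasiDisjoint T R μX μZ := by
  haveI := hXprob; haveI := hZprob
  intro ν hJ hK
  obtain ⟨hνprob, hνinv, hfst, hsnd⟩ := hJ
  have hπmeas : ∀ n, Measurable (πn n) := fun n => (hπn n).1
  have hπmap : ∀ n, μX.map (πn n) = μn n := fun n => (hπn n).2.1
  have hπMP : ∀ n, MeasurePreserving (πn n) μX (μn n) := fun n => ⟨hπmeas n, hπmap n⟩
  -- transporting a.e. statements on `X` to `ν` via the first marginal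
  have hae_fst : ∀ {p : X → Prop}, (∀ᵐ x ∂μX, p x) → ∀ᵐ q : X × Z ∂ν, p q.1 := by
    intro p hp
    apply ae_of_ae_map measurable_fst.aemeasurable
    rwa [hfst]
  set φ : ∀ n, X × Z → Xn n × Z := fun n => Prod.map (πn n) (id : Z → Z) with hφdef
  have hφmeas : ∀ n, Measurable (φ n) := fun n => (hπmeas n).prodMap measurable_id
  set νn : ∀ n, Measure (Xn n × Z) := fun n => ν.map (φ n) with hνndef
  -- the pushforwards are joinings
  have hJn : ∀ n, IsJoining (Tn n) R (μn n) μZ (νn n) := by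
    intro n
    have hmfst : (νn n).map Prod.fst = μn n := by
      show (ν.map (φ n)).map Prod.fst = μn n
      rw [Measure.map_map measurable_fst (hφmeas n)]
      have h1 : (Prod.fst ∘ φ n) = (πn n) ∘ Prod.fst := rfl
      rw [h1, ← Measure.map_map (hπmeas n) measurable_fst, hfst, hπmap n]
    refine ⟨Measure.isProbabilityMeasure_map (hφmeas n).aemeasurable, ?_, hmfst, ?_⟩
    · intro g
      have hψn : Measurable (fun p : Xn n × Z => (Tn n g p.1, R g p.2)) :=
        ((hTncont n g).measurable.comp measurable_fst).prodMk
          ((hRcont g).measurable.comp measurable_snd)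
      have hψ : Measurable (fun p : X × Z => (T g p.1, R g p.2)) :=
        ((hTcont g).measurable.comp measurable_fst).prodMk
          ((hRcont g).measurable.comp measurable_snd)
      refine ⟨hψn, ?_⟩
      show (ν.map (φ n)).map _ = ν.map (φ n)
      rw [Measure.map_map hψn (hφmeas n)]
      have heq : (fun p : X × Z => (Tn n g (πn n p.1), R g p.2)) =ᵐ[ν]
          fun p : X × Z => (πn n (T g p.1), R g p.2) := by
        have h2 : ∀ᵐ q : X × Z ∂ν, πn n (T g q.1) = Tn n g (πn n q.1) := hae_fst ((hπn n).2.2 g)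
        filter_upwards [h2] with q hq
        simp [hq]
      calc ν.map ((fun p : Xn n × Z => (Tn n g p.1, R g p.2)) ∘ φ n)
          = ν.map (fun p : X × Z => (Tn n g (πn n p.1), R g p.2)) := rfl
        _ = ν.map (fun p : X × Z => (πn n (T g p.1), R g p.2)) := Measure.map_congr heq
        _ = ν.map (φ n ∘ fun p : X × Z => (T g p.1, R g p.2)) := rfl
        _ = (ν.map (fun p : X × Z => (T g p.1, R g p.2))).map (φ n) :=
            (Measure.map_map (hφmeas n) hψ).symm
        _ = ν.map (φ n) := by rw [(hνinv g).map_eq]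
    · show (ν.map (φ n)).map Prod.snd = μZ
      rw [Measure.map_map measurable_snd (hφmeas n)]
      have h1 : (Prod.snd ∘ φ n) = (Prod.snd : X × Z → Z) := rfl
      rw [h1, hsnd]
  -- composition with the factor map preserves almost periodicity
  have hcoe : ∀ n (f : Lp ℂ 2 (μn n)),
      (Lp.compMeasurePreserving (πn n) (hπMP n) f : X → ℂ) =ᵐ[μX] f ∘ (πn n) :=
    fun n f => Lp.coeFn_compMeasurePreserving f (hπMP n)
  have hAPcomp : ∀ n (f : Lp ℂ 2 (μn n)), AlmostPeriodic (Tn n) (μn n) f →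
      AlmostPeriodic T μX (Lp.compMeasurePreserving (πn n) (hπMP n) f) := by
    intro n f hf
    set ι : Lp ℂ 2 (μn n) → Lp ℂ 2 μX :=
      fun u => Lp.compMeasurePreserving (πn n) (hπMP n) u with hιdef
    have hι : Isometry ι := Lp.isometry_compMeasurePreserving (hπMP n)
    have key : ∀ g : G,
        (ι (Lp.compMeasurePreserving (Tn n g) (hTnμ n g) f) : X → ℂ) =ᵐ[μX]
          fun x => (ι f : X → ℂ) (T g x) := by
      intro g
      set fg := Lp.compMeasurePreserving (Tn n g) (hTnμ n g) f with hfgdef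
      have h1 : (ι fg : X → ℂ) =ᵐ[μX] fun x => fg (πn n x) := hcoe n fg
      have h2 : ∀ᵐ x ∂μX, (fg : Xn n → ℂ) (πn n x) = f (Tn n g (πn n x)) := by
        apply ae_of_ae_map (hπmeas n).aemeasurable
          (p := fun y => (fg : Xn n → ℂ) y = (f : Xn n → ℂ) (Tn n g y))
        rw [hπmap n]
        exact Lp.coeFn_compMeasurePreserving f (hTnμ n g)
      have h3 : ∀ᵐ x ∂μX, f (Tn n g (πn n x)) = f (πn n (T g x)) := by
        filter_upwards [(hπn n).2.2 g] with x hx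
        rw [hx]
      have h4 : ∀ᵐ x ∂μX, f (πn n (T g x)) = (ι f : X → ℂ) (T g x) := by
        apply ae_of_ae_map (hTμ g).measurable.aemeasurable (p := fun x => f (πn n x) = (ι f : X → ℂ) x)
        rw [(hTμ g).map_eq]
        filter_upwards [hcoe n f] with x hx
        exact hx.symm
      filter_upwards [h1, h2, h3, h4] with x e1 e2 e3 e4
      rw [e1, e2, e3, e4]
    have hSeq : {h : Lp ℂ 2 μX | ∃ g : G, (h : X → ℂ) =ᵐ[μX] fun x => (ι f : X → ℂ) (T g x)} =
        ι '' {h : Lp ℂ 2 (μn n) | ∃ g : G, (h : Xn n → ℂ) =ᵐ[μn n] fun y => f (Tn n g y)} := by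
      ext h
      constructor
      · rintro ⟨g, hg⟩
        refine ⟨Lp.compMeasurePreserving (Tn n g) (hTnμ n g) f,
          ⟨g, Lp.coeFn_compMeasurePreserving f (hTnμ n g)⟩, ?_⟩
        exact (Lp.ext (hg.trans (key g).symm)).symm
      · rintro ⟨u, ⟨g, hu⟩, rfl⟩
        refine ⟨g, ?_⟩
        have : u = Lp.compMeasurePreserving (Tn n g) (hTnμ n g) f :=
          Lp.ext (hu.trans (Lp.coeFn_compMeasurePreserving f (hTnμ n g)).symm)
        rw [this]
        exact key g
      
    unfold AlmostPeriodic at hf ⊢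
    rw [hSeq]
    have himg : IsCompact (ι '' closure {h : Lp ℂ 2 (μn n) |
        ∃ g : G, (h : Xn n → ℂ) =ᵐ[μn n] fun y => f (Tn n g y)}) := hf.image hι.continuous
    exact IsCompact.of_isClosed_subset himg isClosed_closure
      (closure_minimal (Set.image_mono (f := ι) subset_closure) himg.isClosed)
  -- the pushforward joinings project to the Kronecker product
  have hKn : ∀ n, ProjectsToKroneckerProduct (Tn n) R (μn n) μZ (νn n) := by
    intro n f h hf hh
    set F : Lp ℂ 2 μX := Lp.compMeasurePreserving (πn n) (hπMP n) f with hFdef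
    have hQ := hK F h (hAPcomp n f hf) hh
    have hmfst : (νn n).map Prod.fst = μn n := (hJn n).2.2.1
    have hmsnd : (νn n).map Prod.snd = μZ := (hJn n).2.2.2
    have hqm1 : Measure.QuasiMeasurePreserving (Prod.fst : Xn n × Z → Xn n) (νn n) (μn n) :=
      (⟨measurable_fst, hmfst⟩ : MeasurePreserving _ _ _).quasiMeasurePreserving
    have hqm2 : Measure.QuasiMeasurePreserving (Prod.snd : Xn n × Z → Z) (νn n) μZ :=
      (⟨measurable_snd, hmsnd⟩ : MeasurePreserving _ _ _).quasiMeasurePreserving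
    have hASM : AEStronglyMeasurable (fun q : Xn n × Z => f q.1 * h q.2) (νn n) :=
      ((Lp.aestronglyMeasurable f).comp_quasiMeasurePreserving hqm1).mul
        ((Lp.aestronglyMeasurable h).comp_quasiMeasurePreserving hqm2)
    have hASM' : AEStronglyMeasurable (fun q : Xn n × Z => f q.1 * h q.2) (ν.map (φ n)) := hASM
    have hint : ∫ p, f p.1 * h p.2 ∂(νn n) = ∫ p, (F : X → ℂ) p.1 * h p.2 ∂ν := by
      show ∫ p, f p.1 * h p.2 ∂(ν.map (φ n)) = ∫ p, (F : X → ℂ) p.1 * h p.2 ∂ν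
      rw [integral_map (hφmeas n).aemeasurable hASM']
      refine integral_congr_ae ?_
      have h2 : ∀ᵐ q : X × Z ∂ν, (F : X → ℂ) q.1 = f (πn n q.1) := hae_fst (hcoe n f)
      filter_upwards [h2] with q hq
      show f (πn n q.1) * h q.2 = (F : X → ℂ) q.1 * h q.2
      rw [hq]
    have hFint : ∫ x, (F : X → ℂ) x ∂μX = ∫ y, f y ∂(μn n) := by
      calc ∫ x, (F : X → ℂ) x ∂μX = ∫ x, f (πn n x) ∂μX := integral_congr_ae (hcoe n f)
        _ = ∫ y, f y ∂(μX.map (πn n)) :=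
            (integral_map (hπmeas n).aemeasurable
              (by rw [hπmap n]; exact Lp.aestronglyMeasurable f)).symm
        _ = ∫ y, f y ∂(μn n) := by rw [hπmap n]
    rw [hint, hQ, hFint]
  have hprod : ∀ n, νn n = (μn n).prod μZ := fun n => hQD n (νn n) (hJn n) (hKn n)
  -- the key rectangle computation
  have hrect : ∀ n (B₀ : Set (Xn n)) (C : Set Z), MeasurableSet B₀ → MeasurableSet C →
      ν (((πn n) ⁻¹' B₀) ×ˢ C) = μX ((πn n) ⁻¹' B₀) * μZ C := by
    intro n B₀ C hB₀ hC
    have hpre : (φ n) ⁻¹' (B₀ ×ˢ C) = ((πn n) ⁻¹' B₀) ×ˢ C := by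
      ext ⟨x, z⟩; simp [hφdef, Prod.map]
    calc ν (((πn n) ⁻¹' B₀) ×ˢ C) = νn n (B₀ ×ˢ C) := by
          rw [show νn n = ν.map (φ n) from rfl,
            Measure.map_apply (hφmeas n) (hB₀.prod hC), hpre]
      _ = μn n B₀ * μZ C := by rw [hprod n, Measure.prod_prod]
      _ = μX ((πn n) ⁻¹' B₀) * μZ C := by
          rw [← hπmap n, Measure.map_apply (hπmeas n) hB₀]
  -- null sets in the first coordinate are ν-null
  have hνfst_null : ∀ s : Set X, μX s = 0 → ν (Prod.fst ⁻¹' s) = 0 := by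
    intro s hs
    obtain ⟨t, hst, htm, ht0⟩ := exists_measurable_superset_of_null hs
    have h1 : ν (Prod.fst ⁻¹' t) = 0 := by
      rw [← hfst] at ht0
      rwa [Measure.map_apply measurable_fst htm] at ht0
    exact measure_mono_null (Set.preimage_mono hst) h1
  -- replacing a set by an a.e. equal one does not change ν-measures of rectangles
  have hcongr : ∀ (A B : Set X) (C : Set Z), A =ᵐ[μX] B → ν (A ×ˢ C) = ν (B ×ˢ C) := by
    intro A B C hAB
    have h0 : μX (symmDiff A B) = 0 := measure_symmDiff_eq_zero_iff.2 hAB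
    apply measure_congr
    rw [← measure_symmDiff_eq_zero_iff]
    refine measure_mono_null ?_ (hνfst_null _ h0)
    intro p hp
    simp only [Set.mem_symmDiff, Set.mem_prod, Set.mem_preimage] at hp ⊢
    tauto
  -- iterate `hmono`
  have hmono' : ∀ (n m : ℕ), n ≤ m → ∀ A : Set X,
      MeasurableSet[MeasurableSpace.comap (πn n) inferInstance] A →
      ∃ B : Set X, MeasurableSet[MeasurableSpace.comap (πn m) inferInstance] B ∧
        A =ᵐ[μX] B := by
    intro n m hnm
    induction m, hnm using Nat.le_induction with
    | base => exact fun A hA => ⟨A, hA, Filter.EventuallyEq.rfl⟩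
    | succ m hm ih =>
      intro A hA
      obtain ⟨B, hB, hAB⟩ := ih A hA
      obtain ⟨B', hB', h0⟩ := hmono m B hB
      exact ⟨B', hB', hAB.trans (measure_symmDiff_eq_zero_iff.1 h0)⟩
  -- the π-system of sets a.e. equal to a set measurable with respect to some `σ(π_n)`
  set P' : Set (Set X) := {B : Set X | MeasurableSet B ∧
    ∃ n, ∃ B₀ : Set (Xn n), MeasurableSet B₀ ∧ B =ᵐ[μX] (πn n) ⁻¹' B₀} with hP'def
  have hπsys : IsPiSystem P' := by
    rintro s ⟨hsm, n1, C1, hC1, hs1⟩ t ⟨htm, n2, C2, hC2, ht1⟩ _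
    have hm1 : MeasurableSet[MeasurableSpace.comap (πn n1) inferInstance] ((πn n1) ⁻¹' C1) :=
      MeasurableSpace.measurableSet_comap.2 ⟨C1, hC1, rfl⟩
    have hm2 : MeasurableSet[MeasurableSpace.comap (πn n2) inferInstance] ((πn n2) ⁻¹' C2) :=
      MeasurableSpace.measurableSet_comap.2 ⟨C2, hC2, rfl⟩
    obtain ⟨B1, hB1, he1⟩ := hmono' n1 (max n1 n2) (le_max_left _ _) _ hm1
    obtain ⟨B2, hB2, he2⟩ := hmono' n2 (max n1 n2) (le_max_right _ _) _ hm2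
    obtain ⟨D1, hD1, rfl⟩ := MeasurableSpace.measurableSet_comap.1 hB1
    obtain ⟨D2, hD2, rfl⟩ := MeasurableSpace.measurableSet_comap.1 hB2
    refine ⟨hsm.inter htm, max n1 n2, D1 ∩ D2, hD1.inter hD2, ?_⟩
    rw [Set.preimage_inter]
    exact (hs1.trans he1).inter (ht1.trans he2)
  have hcomapP : ∀ n, MeasurableSpace.comap (πn n) inferInstance ≤
      MeasurableSpace.generateFrom P' := by
    intro n s hs
    obtain ⟨s₀, hs₀, rfl⟩ := MeasurableSpace.measurableSet_comap.1 hs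
    exact MeasurableSpace.measurableSet_generateFrom
      ⟨(hπmeas n) hs₀, n, s₀, hs₀, Filter.EventuallyEq.rfl⟩
  have hgenP : MeasurableSpace.generateFrom P' ≤ (inferInstance : MeasurableSpace X) :=
    MeasurableSpace.generateFrom_le fun t ht => ht.1
  -- main Dynkin argument
  have hmain : ∀ t : Set X, MeasurableSet[MeasurableSpace.generateFrom P'] t →
      ∀ C : Set Z, MeasurableSet C → ν (t ×ˢ C) = μX t * μZ C := by
    refine @MeasurableSpace.induction_on_inter X (MeasurableSpace.generateFrom P')
      (fun t _ => ∀ C : Set Z, MeasurableSet C → ν (t ×ˢ C) = μX t * μZ C) P'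
      rfl hπsys ?_ ?_ ?_ ?_
    · intro C _; simp
    · rintro t ⟨htm, n, B₀, hB₀, hae⟩ C hC
      rw [hcongr t ((πn n) ⁻¹' B₀) C hae, measure_congr hae, hrect n B₀ C hB₀ hC]
    · intro t ht IH C hC
      have htB : MeasurableSet t := hgenP t ht
      have h1 : ν (Set.univ ×ˢ C) = μZ C := by
        have he : (Set.univ : Set X) ×ˢ C = Prod.snd ⁻¹' C := by
          ext ⟨x, z⟩; simp
        rw [he, ← hsnd, Measure.map_apply measurable_snd hC]
      have h2 : tᶜ ×ˢ C = (Set.univ ×ˢ C) \ (t ×ˢ C) := by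
        ext ⟨x, z⟩
        simp only [Set.mem_prod, Set.mem_compl_iff, Set.mem_diff, Set.mem_univ, true_and]
        tauto
      rw [h2, measure_diff (Set.prod_mono (Set.subset_univ t) subset_rfl) (htB.prod hC).nullMeasurableSet
        (measure_ne_top ν _), h1, IH C hC,
        prob_compl_eq_one_sub htB, ENNReal.sub_mul (fun _ _ => measure_ne_top μZ C), one_mul]
    · intro f hdisj hfm IH C hC
      have hfB : ∀ i, MeasurableSet (f i) := fun i => hgenP _ (hfm i)
      have he : (⋃ i, f i) ×ˢ C = ⋃ i, (f i ×ˢ C) := Set.iUnion_prod_const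
      have hdisj' : Pairwise (Function.onFun Disjoint fun i => f i ×ˢ C) := by
        intro i j hij
        refine Set.disjoint_left.2 fun p hp hq => ?_
        exact Set.disjoint_left.1 (hdisj hij) hp.1 hq.1
      rw [he, measure_iUnion hdisj' (fun i => (hfB i).prod hC), measure_iUnion hdisj hfB,
        ← ENNReal.tsum_mul_right]
      exact tsum_congr fun i => IH i C hC
  -- conclude for all Borel sets using `hgen`
  have hall : ∀ (A : Set X), MeasurableSet A → ∀ C : Set Z, MeasurableSet C →
      ν (A ×ˢ C) = μX A * μZ C := by
    intro A hA C hC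
    obtain ⟨B, hB, h0⟩ := hgen A hA
    have hBB : MeasurableSet[MeasurableSpace.generateFrom P'] B :=
      (iSup_le hcomapP : (⨆ n, MeasurableSpace.comap (πn n) inferInstance) ≤
        MeasurableSpace.generateFrom P') B hB
    have hAB : A =ᵐ[μX] B := measure_symmDiff_eq_zero_iff.1 h0
    rw [hcongr A B C hAB, measure_congr hAB, hmain B hBB C hC]
  -- extend to equality of measures
  refine ext_of_generate_finite _ generateFrom_prod.symm isPiSystem_prod ?_ ?_
  · rintro _ ⟨s1, hs1, s2, hs2, rfl⟩
    rw [Measure.prod_prod]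
    exact hall s1 hs1 s2 hs2
  · haveI : IsProbabilityMeasure (μX.prod μZ) := by infer_instance
    simp
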